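/- Let k be a field and let R = k[x,y]/(xy) with the k-algebra involution σ swapping x and y. Then the invariant subring R^σ is generated by x + y as a k-algebra, and the k-algebra homomorphism k[t] → R^σ sending t to x + y is an isomorphism. Moreover, the composition k[t] → R^σ ⊆ R → k[x], where the last map sends y to 0 and x to x, is an isomorphism onto k[x]. -/

import Mathlib

open MvPolynomial

namespace TwistedStmt10

variable (k : Type) [Field k]

/-- The ideal `(xy)` of `k[x,y]`. -/
noncomputable def I : Ideal (MvPolynomial (Fin 2) k) := Ideal.span {X 0 * X 1}

/-- The ring `R = k[x,y]/(xy)`. -/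
abbrev R := MvPolynomial (Fin 2) k ⧸ I k

/-- The class of `x` in `R`. -/
noncomputable def x : R k := Ideal.Quotient.mk (I k) (X 0)

/-- The class of `y` in `R`. -/
noncomputable def y : R k := Ideal.Quotient.mk (I k) (X 1)

/-- The involution of `R = k[x,y]/(xy)` swapping `x` and `y`. -/
noncomputable def sigma : R k ≃ₐ[k] R k :=
  Ideal.quotientEquivAlg (I k) (I k) (renameEquiv k (Equiv.swap (0 : Fin 2) 1)) (by
    rw [I, Ideal.map_span, Set.image_singleton]
    congr 1
    simp [rename_X, mul_comm])

/-- The map `R = k[x,y]/(xy) → k[x]` sending `x ↦ x`, `y ↦ 0`. -/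
noncomputable def q : R k →ₐ[k] Polynomial k :=
  Ideal.Quotient.liftₐ (I k) (aeval ![Polynomial.X, 0]) (by
    intro p hp
    rw [I, Ideal.mem_span_singleton] at hp
    obtain ⟨c, rfl⟩ := hp
    simp)

lemma q_mk (p : MvPolynomial (Fin 2) k) :
    q k (Ideal.Quotient.mk (I k) p) = aeval ![Polynomial.X, 0] p := by
  simp [q]
  exact Ideal.Quotient.lift_mk _ _ _

lemma sigma_mk (p : MvPolynomial (Fin 2) k) :
    sigma k (Ideal.Quotient.mk (I k) p) =
      Ideal.Quotient.mk (I k) (rename (Equiv.swap (0 : Fin 2) 1) p) := by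
  rfl

lemma decomp (p : MvPolynomial (Fin 2) k) :
    ∃ (f g : Polynomial k) (h : MvPolynomial (Fin 2) k),
      p = Polynomial.aeval (X 0 : MvPolynomial (Fin 2) k) f +
        Polynomial.aeval (X 1 : MvPolynomial (Fin 2) k) g + X 0 * X 1 * h := by
  induction p using MvPolynomial.induction_on with
  | C a => exact ⟨Polynomial.C a, 0, 0, by simp⟩
  | add p q hp hq =>
      obtain ⟨f1, g1, h1, rfl⟩ := hp
      obtain ⟨f2, g2, h2, rfl⟩ := hq
      exact ⟨f1 + f2, g1 + g2, h1 + h2, by simp only [map_add]; ring⟩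
  | mul_X p i hp =>
      obtain ⟨f, g, h, rfl⟩ := hp
      fin_cases i
      · refine ⟨(f + Polynomial.C (g.coeff 0)) * Polynomial.X, 0,
          Polynomial.aeval (X 1) g.divX + X 0 * h, ?_⟩
        have hg : (Polynomial.aeval (X 1 : MvPolynomial (Fin 2) k) g) =
            X 1 * Polynomial.aeval (X 1 : MvPolynomial (Fin 2) k) g.divX + C (g.coeff 0) := by
          conv_lhs => rw [← Polynomial.X_mul_divX_add g]
          rw [map_add, map_mul, Polynomial.aeval_X, Polynomial.aeval_C, algebraMap_eq]
        rw [hg]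
        simp only [map_add, map_mul, map_zero, Fin.mk_zero, Fin.mk_one, Polynomial.aeval_X,
          Polynomial.aeval_C, algebraMap_eq]
        ring
      · refine ⟨0, (g + Polynomial.C (f.coeff 0)) * Polynomial.X,
          Polynomial.aeval (X 0) f.divX + X 1 * h, ?_⟩
        have hf : (Polynomial.aeval (X 0 : MvPolynomial (Fin 2) k) f) =
            X 0 * Polynomial.aeval (X 0 : MvPolynomial (Fin 2) k) f.divX + C (f.coeff 0) := by
          conv_lhs => rw [← Polynomial.X_mul_divX_add f]
          rw [map_add, map_mul, Polynomial.aeval_X, Polynomial.aeval_C, algebraMap_eq]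
        rw [hf]
        simp only [map_add, map_mul, map_zero, Fin.mk_zero, Fin.mk_one, Polynomial.aeval_X,
          Polynomial.aeval_C, algebraMap_eq]
        ring

lemma mem_I_of (p : MvPolynomial (Fin 2) k)
    (h1 : aeval ![(Polynomial.X : Polynomial k), 0] p = 0)
    (h2 : aeval ![(0 : Polynomial k), Polynomial.X] p = 0) : p ∈ I k := by
  obtain ⟨f, g, h, rfl⟩ := decomp k p
  have hcomp' : ∀ (v : Fin 2 → Polynomial k) (a : MvPolynomial (Fin 2) k) (s : Polynomial k),
      aeval v (Polynomial.aeval a s) = Polynomial.aeval (aeval v a) s := fun v a s =>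
    (Polynomial.aeval_algHom_apply (aeval v) a s).symm
  have hz : ∀ s : Polynomial k, (Polynomial.aeval (R := k) (0 : Polynomial k)) s
      = Polynomial.C (s.coeff 0) := by
    intro s
    rw [Polynomial.aeval_def, Polynomial.eval₂_at_zero]
    rfl
  simp only [map_add, map_mul, hcomp', aeval_X, Matrix.cons_val_zero, Matrix.cons_val_one,
    Matrix.head_cons, Polynomial.aeval_X_left_apply, hz, zero_mul, mul_zero, add_zero] at h1 h2
  have hf : f = -Polynomial.C (g.coeff 0) := by linear_combination h1
  have hfc : f.coeff 0 = -(g.coeff 0) := by rw [hf]; simp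
  have hgg : g = Polynomial.C (g.coeff 0) := by
    have : g = -Polynomial.C (f.coeff 0) := by linear_combination h2
    rw [this, hfc]; simp
  have : (Polynomial.aeval (X 0 : MvPolynomial (Fin 2) k)) f +
      (Polynomial.aeval (X 1 : MvPolynomial (Fin 2) k)) g = 0 := by
    rw [hf, hgg]
    simp
  rw [this, zero_add, I, Ideal.mem_span_singleton]
  exact ⟨h, rfl⟩

lemma eq_zero_of (r : R k) (h1 : q k r = 0) (h2 : q k (sigma k r) = 0) : r = 0 := by
  obtain ⟨p, rfl⟩ := Ideal.Quotient.mk_surjective r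
  rw [q_mk] at h1
  rw [sigma_mk, q_mk, aeval_rename] at h2
  have hc : (![Polynomial.X, 0] : Fin 2 → Polynomial k) ∘ (Equiv.swap (0 : Fin 2) 1)
      = ![0, Polynomial.X] := by
    funext i
    fin_cases i <;> simp
  rw [hc] at h2
  exact Ideal.Quotient.eq_zero_iff_mem.mpr (mem_I_of k p h1 h2)

lemma sigma_x : sigma k (x k) = y k := by
  rw [x, sigma_mk]
  simp [y]

lemma sigma_y : sigma k (y k) = x k := by
  rw [y, sigma_mk]
  simp [x]

lemma sigma_aeval (s : Polynomial k) :
    sigma k (Polynomial.aeval (x k + y k) s) = Polynomial.aeval (x k + y k) s := by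
  rw [← Polynomial.aeval_algHom_apply, map_add, sigma_x, sigma_y, add_comm]

theorem invariants_of_swap :
    Function.Injective (Polynomial.aeval (x k + y k) : Polynomial k →ₐ[k] R k) ∧
    (∀ r : R k, sigma k r = r ↔
      r ∈ (Polynomial.aeval (x k + y k) : Polynomial k →ₐ[k] R k).range) ∧
    Function.Bijective
      ((q k).comp (Polynomial.aeval (x k + y k) : Polynomial k →ₐ[k] R k)) := by
  have hqx : q k (x k) = Polynomial.X := by rw [x, q_mk]; simp
  have hqy : q k (y k) = 0 := by rw [y, q_mk]; simp
  have hcomp : (q k).comp (Polynomial.aeval (x k + y k) : Polynomial k →ₐ[k] R k)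
      = AlgHom.id k (Polynomial k) := by
    apply Polynomial.algHom_ext
    simp [hqx, hqy]
  have hinj : Function.Injective (Polynomial.aeval (x k + y k) : Polynomial k →ₐ[k] R k) := by
    have : Function.Injective (⇑(q k) ∘ ⇑(Polynomial.aeval (x k + y k) : Polynomial k →ₐ[k] R k)) := by
      rw [← AlgHom.coe_comp, hcomp]
      exact fun a b hab => hab
    exact Function.Injective.of_comp this
  refine ⟨hinj, fun r => ⟨fun hr => ?_, ?_⟩, ?_⟩
  · refine ⟨q k r, ?_⟩
    have hq1 : q k (Polynomial.aeval (x k + y k) (q k r) - r) = 0 := by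
      have := congrArg (fun φ : Polynomial k →ₐ[k] Polynomial k => φ (q k r)) hcomp
      simp only [AlgHom.comp_apply, AlgHom.id_apply] at this
      rw [map_sub, this, sub_self]
    have hq2 : q k (sigma k (Polynomial.aeval (x k + y k) (q k r) - r)) = 0 := by
      rw [map_sub, sigma_aeval, hr]
      exact hq1
    have := eq_zero_of k _ hq1 hq2
    have := sub_eq_zero.mp this
    exact this
  · rintro ⟨p, rfl⟩
    exact sigma_aeval k p
  · rw [hcomp]
    exact Function.bijective_id

end TwistedStmt10
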